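/- Let a, b be real numbers with 0 ≤ a ≤ 1/2, b > 0 and a² + b² ≥ 1, let Λ ⊂ ℝ² be the lattice generated over ℤ by (1,0) and (a,b), let V(0) = {x ∈ ℝ² : ‖x‖ ≤ ‖x − λ‖ for all λ ∈ Λ} be the Voronoi cell of 0, and let B(0) = [−1/2, 1/2] × [−b/2, b/2] be the Babai (nearest-plane) cell of 0. Then the two-dimensional Lebesgue measure of B(0) ∩ V(0)ᶜ divided by the Lebesgue measure of B(0) equals (a − a²)/(4b²). -/

import Mathlib

open MeasureTheory

set_option maxHeartbeats 1600000 in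
private lemma babai_key (a b u w : ℝ) (ha0 : 0 ≤ a) (ha : a ≤ 1/2) (hb : 0 < b)
    (hab : 1 ≤ a^2 + b^2)
    (hu1 : -(1/2) ≤ u) (hu2 : u ≤ 1/2) (hw1 : -(b/2) ≤ w) (hw2 : w ≤ b/2)
    (h1 : 2*(u*a + w*b) ≤ a^2 + b^2)
    (h2 : 2*(u*(-a) + w*(-b)) ≤ a^2 + b^2)
    (h3 : 2*(u*(a-1) + w*b) ≤ (a-1)^2 + b^2)
    (h4 : 2*(u*(1-a) + w*(-b)) ≤ (a-1)^2 + b^2)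
    (m n : ℤ) : 2*(u*(m + n*a) + w*(n*b)) ≤ (m + n*a)^2 + (n*b)^2 := by
  have hb2 : (3:ℝ)/4 ≤ b^2 := by nlinarith
  rcases eq_or_ne n 0 with hn | hn
  · subst hn
    rcases eq_or_ne m 0 with hm | hm
    · subst hm; norm_num
    · have : (1:ℝ) ≤ (m:ℝ) ∨ (m:ℝ) ≤ -1 := by
        rcases lt_or_gt_of_ne hm with h | h
        · right; exact_mod_cast (by omega : m ≤ -1)
        · left; exact_mod_cast h
      rcases this with h | h <;> push_cast <;> nlinarith
  · rcases eq_or_ne n 1 with hn1 | hn1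
    · subst hn1; push_cast
      rcases eq_or_ne m 0 with hm | hm
      · subst hm; push_cast; nlinarith
      rcases eq_or_ne m (-1) with hm1 | hm1
      · subst hm1; push_cast; nlinarith
      have : (1:ℝ) ≤ (m:ℝ) ∨ (m:ℝ) ≤ -2 := by
        rcases lt_trichotomy m 0 with h | h | h
        · right; exact_mod_cast (by omega : m ≤ -2)
        · exact absurd h hm
        · left; exact_mod_cast h
      rcases this with h | h
      · have hint : 0 ≤ (m:ℝ) * ((m:ℝ) + 2*a - 2*u) :=
          mul_nonneg (by linarith) (by linarith)
        nlinarith [hint]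
      · have hint : 0 ≤ (-((m:ℝ)+1)) * (-((m:ℝ) + 2*a - 1 - 2*u)) :=
          mul_nonneg (by linarith) (by linarith)
        nlinarith [hint]
    rcases eq_or_ne n (-1) with hn2 | hn2
    · subst hn2; push_cast
      rcases eq_or_ne m 0 with hm | hm
      · subst hm; push_cast; nlinarith
      rcases eq_or_ne m 1 with hm1 | hm1
      · subst hm1; push_cast; nlinarith
      have : (2:ℝ) ≤ (m:ℝ) ∨ (m:ℝ) ≤ -1 := by
        rcases lt_trichotomy m 1 with h | h | h
        · right; exact_mod_cast (by omega : m ≤ -1)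
        · exact absurd h hm1
        · left; exact_mod_cast (by omega : (2:ℤ) ≤ m)
      rcases this with h | h
      · have hint : 0 ≤ ((m:ℝ)-1) * ((m:ℝ) - 2*a + 1 - 2*u) :=
          mul_nonneg (by linarith) (by linarith)
        nlinarith [hint]
      · have hint : 0 ≤ (-(m:ℝ)) * (-((m:ℝ) - 2*a - 2*u)) :=
          mul_nonneg (by linarith) (by linarith)
        nlinarith [hint]
    · have : (2:ℝ) ≤ (n:ℝ) ∨ (n:ℝ) ≤ -2 := by
        rcases lt_trichotomy n 0 with h | h | h
        · right; exact_mod_cast (by omega : n ≤ -2)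
        · exact absurd h hn
        · left; exact_mod_cast (by omega : (2:ℤ) ≤ n)
      rcases this with h | h
      · nlinarith [sq_nonneg ((m:ℝ) + n*a - u), sq_nonneg ((n:ℝ)*b - w),
          mul_le_mul_of_nonneg_left h hb.le]
      · nlinarith [sq_nonneg ((m:ℝ) + n*a - u), sq_nonneg ((n:ℝ)*b + w),
          mul_le_mul_of_nonneg_left h hb.le]

private lemma babai_vol_Ioc (l r c A B : ℝ) (hlr : l ≤ r)
    (hc : ∀ u ∈ Set.Ioc l r, A + B*u ≤ c) :
    volume {p : ℝ×ℝ | p.1 ∈ Set.Ioc l r ∧ p.2 ∈ Set.Ioc (A + B*p.1) c}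
      = ENNReal.ofReal ((c-A)*(r-l) - B*(r^2-l^2)/2) := by
  have hT : MeasurableSet {p : ℝ×ℝ | p.1 ∈ Set.Ioc l r ∧ p.2 ∈ Set.Ioc (A + B*p.1) c} := by
    apply MeasurableSet.inter
    · exact measurable_fst measurableSet_Ioc
    · apply MeasurableSet.inter
      · exact measurableSet_lt (by fun_prop) measurable_snd
      · exact measurable_snd measurableSet_Iic
  rw [Measure.volume_eq_prod, Measure.prod_apply hT]
  have hslice : ∀ u : ℝ,
      volume (Prod.mk u ⁻¹' {p : ℝ×ℝ | p.1 ∈ Set.Ioc l r ∧ p.2 ∈ Set.Ioc (A + B*p.1) c})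
      = (Set.Ioc l r).indicator (fun u => ENNReal.ofReal (c - (A + B*u))) u := by
    intro u
    by_cases hu : u ∈ Set.Ioc l r
    · rw [Set.indicator_of_mem hu]
      have : Prod.mk u ⁻¹' {p : ℝ×ℝ | p.1 ∈ Set.Ioc l r ∧ p.2 ∈ Set.Ioc (A + B*p.1) c}
          = Set.Ioc (A + B*u) c := by
        ext w
        simp only [Set.mem_preimage, Set.mem_setOf_eq, Set.mem_Ioc]
        simp only [Set.mem_Ioc] at hu
        tauto
      rw [this, Real.volume_Ioc]
    · rw [Set.indicator_of_notMem hu]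
      have : Prod.mk u ⁻¹' {p : ℝ×ℝ | p.1 ∈ Set.Ioc l r ∧ p.2 ∈ Set.Ioc (A + B*p.1) c} = ∅ := by
        ext w
        simp only [Set.mem_preimage, Set.mem_setOf_eq, Set.mem_empty_iff_false, iff_false]
        intro h; exact hu h.1
      rw [this, measure_empty]
  simp_rw [hslice]
  rw [lintegral_indicator measurableSet_Ioc]
  rw [← ofReal_integral_eq_lintegral_ofReal]
  · congr 1
    rw [← intervalIntegral.integral_of_le hlr]
    rw [show (fun x => c - (A + B*x)) = fun x => (c - A) + (-B) * x from by funext x; ring]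
    rw [intervalIntegral.integral_add (intervalIntegrable_const)
        (((by fun_prop : Continuous fun x : ℝ => (-B) * x).intervalIntegrable _ _)),
      intervalIntegral.integral_const, intervalIntegral.integral_const_mul, integral_id]
    simp only [smul_eq_mul]; ring
  · apply Continuous.integrableOn_Ioc; fun_prop
  · filter_upwards [ae_restrict_mem measurableSet_Ioc] with u hu
    have := hc u hu; simp only [Pi.zero_apply]; linarith

private lemma babai_vol_Ico (l r c A B : ℝ) (hlr : l ≤ r)
    (hc : ∀ u ∈ Set.Ico l r, A + B*u ≤ c) :
    volume {p : ℝ×ℝ | p.1 ∈ Set.Ico l r ∧ p.2 ∈ Set.Ioc (A + B*p.1) c}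
      = ENNReal.ofReal ((c-A)*(r-l) - B*(r^2-l^2)/2) := by
  have hT : MeasurableSet {p : ℝ×ℝ | p.1 ∈ Set.Ico l r ∧ p.2 ∈ Set.Ioc (A + B*p.1) c} := by
    apply MeasurableSet.inter
    · exact measurable_fst measurableSet_Ico
    · apply MeasurableSet.inter
      · exact measurableSet_lt (by fun_prop) measurable_snd
      · exact measurable_snd measurableSet_Iic
  rw [Measure.volume_eq_prod, Measure.prod_apply hT]
  have hslice : ∀ u : ℝ,
      volume (Prod.mk u ⁻¹' {p : ℝ×ℝ | p.1 ∈ Set.Ico l r ∧ p.2 ∈ Set.Ioc (A + B*p.1) c})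
      = (Set.Ico l r).indicator (fun u => ENNReal.ofReal (c - (A + B*u))) u := by
    intro u
    by_cases hu : u ∈ Set.Ico l r
    · rw [Set.indicator_of_mem hu]
      have : Prod.mk u ⁻¹' {p : ℝ×ℝ | p.1 ∈ Set.Ico l r ∧ p.2 ∈ Set.Ioc (A + B*p.1) c}
          = Set.Ioc (A + B*u) c := by
        ext w
        simp only [Set.mem_preimage, Set.mem_setOf_eq, Set.mem_Ioc, Set.mem_Ico]
        simp only [Set.mem_Ico] at hu
        tauto
      rw [this, Real.volume_Ioc]
    · rw [Set.indicator_of_notMem hu]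
      have : Prod.mk u ⁻¹' {p : ℝ×ℝ | p.1 ∈ Set.Ico l r ∧ p.2 ∈ Set.Ioc (A + B*p.1) c} = ∅ := by
        ext w
        simp only [Set.mem_preimage, Set.mem_setOf_eq, Set.mem_empty_iff_false, iff_false]
        intro h; exact hu h.1
      rw [this, measure_empty]
  simp_rw [hslice]
  rw [lintegral_indicator measurableSet_Ico]
  rw [← ofReal_integral_eq_lintegral_ofReal]
  · congr 1
    rw [MeasureTheory.restrict_Ico_eq_restrict_Ioc, ← intervalIntegral.integral_of_le hlr]
    rw [show (fun x => c - (A + B*x)) = fun x => (c - A) + (-B) * x from by funext x; ring]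
    rw [intervalIntegral.integral_add (intervalIntegrable_const)
        (((by fun_prop : Continuous fun x : ℝ => (-B) * x).intervalIntegrable _ _)),
      intervalIntegral.integral_const, intervalIntegral.integral_const_mul, integral_id]
    simp only [smul_eq_mul]; ring
  · exact ((by fun_prop : Continuous fun u : ℝ => c - (A + B*u)).integrableOn_Icc).mono_set
      Set.Ico_subset_Icc_self
  · filter_upwards [ae_restrict_mem measurableSet_Ico] with u hu
    have := hc u hu; simp only [Pi.zero_apply]; linarith

set_option maxHeartbeats 3000000 in
/-- Theorem 1 of the paper: for a Minkowski-reduced basis `{(1,0),(a,b)}` with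
`0 ≤ a ≤ 1/2`, `b > 0`, `a² + b² ≥ 1`, the fraction of the Babai cell
`B(0) = [−1/2,1/2] × [−b/2,b/2]` lying outside the Voronoi cell `V(0)` is
`(a − a²)/(4b²)`. -/
theorem babai_error_probability (a b : ℝ)
    (ha0 : 0 ≤ a) (ha : a ≤ 1 / 2) (hb : 0 < b) (hab : 1 ≤ a ^ 2 + b ^ 2)
    (v₁ v₂ : EuclideanSpace ℝ (Fin 2))
    (hv₁ : v₁ 0 = 1 ∧ v₁ 1 = 0)
    (hv₂ : v₂ 0 = a ∧ v₂ 1 = b)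
    (Λ : Set (EuclideanSpace ℝ (Fin 2)))
    (hΛ : Λ = {p | ∃ m n : ℤ, p = m • v₁ + n • v₂})
    (V₀ : Set (EuclideanSpace ℝ (Fin 2)))
    (hV₀ : V₀ = {x | ∀ p ∈ Λ, ‖x‖ ≤ ‖x - p‖})
    (B₀ : Set (EuclideanSpace ℝ (Fin 2)))
    (hB₀ : B₀ = {x | x 0 ∈ Set.Icc (-(1 / 2) : ℝ) (1 / 2) ∧
                      x 1 ∈ Set.Icc (-(b / 2)) (b / 2)}) :
    (volume (B₀ ∩ V₀ᶜ)).toReal / (volume B₀).toReal = (a - a ^ 2) / (4 * b ^ 2) := by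
  obtain ⟨hv11, hv12⟩ := hv₁
  obtain ⟨hv21, hv22⟩ := hv₂
  have hb2 : (3:ℝ)/4 ≤ b^2 := by nlinarith
  -- measure-preserving identification with ℝ × ℝ
  set φ : EuclideanSpace ℝ (Fin 2) ≃ᵐ ℝ × ℝ :=
    (MeasurableEquiv.toLp 2 (Fin 2 → ℝ)).symm.trans MeasurableEquiv.finTwoArrow with hφdef
  have hφp : MeasurePreserving φ volume volume :=
    (volume_preserving_finTwoArrow ℝ).comp (EuclideanSpace.volume_preserving_symm_measurableEquiv_toLp _)
  have hφx : ∀ x : EuclideanSpace ℝ (Fin 2), φ x = (x 0, x 1) := fun _ => rfl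
  -- coordinates of lattice points
  have hcoord : ∀ m n : ℤ, ((m • v₁ + n • v₂ : EuclideanSpace ℝ (Fin 2)) 0 = (m:ℝ) + n*a)
      ∧ ((m • v₁ + n • v₂ : EuclideanSpace ℝ (Fin 2)) 1 = (n:ℝ)*b) := by
    intro m n
    constructor
    · show (m • v₁) 0 + (n • v₂) 0 = _
      simp [PiLp.smul_apply, hv11, hv21, zsmul_eq_mul]
    · show (m • v₁) 1 + (n • v₂) 1 = _
      simp [PiLp.smul_apply, hv12, hv22, zsmul_eq_mul]
  have hnormsq : ∀ y : EuclideanSpace ℝ (Fin 2), ‖y‖^2 = (y 0)^2 + (y 1)^2 := by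
    intro y
    rw [EuclideanSpace.norm_eq, Real.sq_sqrt (by positivity)]
    simp [Fin.sum_univ_two, sq_abs]
  have hnorm_iff : ∀ x y : EuclideanSpace ℝ (Fin 2),
      (‖x‖ ≤ ‖y‖ ↔ (x 0)^2 + (x 1)^2 ≤ (y 0)^2 + (y 1)^2) := by
    intro x y
    rw [← hnormsq, ← hnormsq]
    constructor
    · intro h; exact pow_le_pow_left₀ (norm_nonneg _) h 2
    · intro h
      have := Real.sqrt_le_sqrt h
      rwa [Real.sqrt_sq (norm_nonneg _), Real.sqrt_sq (norm_nonneg _)] at this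
  have hsub0 : ∀ (x p : EuclideanSpace ℝ (Fin 2)), (x - p) 0 = x 0 - p 0 := fun _ _ => rfl
  have hsub1 : ∀ (x p : EuclideanSpace ℝ (Fin 2)), (x - p) 1 = x 1 - p 1 := fun _ _ => rfl
  -- the error set in ℝ × ℝ
  set E : Set (ℝ×ℝ) := {p : ℝ×ℝ |
      (p.1 ∈ Set.Icc (-(1/2):ℝ) (1/2) ∧ p.2 ∈ Set.Icc (-(b/2)) (b/2)) ∧
      ¬(2*(p.1*a + p.2*b) ≤ a^2 + b^2 ∧ 2*(p.1*(-a) + p.2*(-b)) ≤ a^2 + b^2 ∧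
        2*(p.1*(a-1) + p.2*b) ≤ (a-1)^2 + b^2 ∧ 2*(p.1*(1-a) + p.2*(-b)) ≤ (a-1)^2 + b^2)}
      with hEdef
  -- characterization of the error set
  have hmain : B₀ ∩ V₀ᶜ = φ ⁻¹' E := by
    ext x
    simp only [Set.mem_inter_iff, Set.mem_compl_iff, hB₀, hV₀, Set.mem_setOf_eq,
      Set.mem_preimage, hEdef, hφx]
    constructor
    · rintro ⟨⟨hx0, hx1⟩, hxV⟩
      have hx0' : x 0 ∈ Set.Icc (-(1/2):ℝ) (1/2) := by
        simpa using hx0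
      refine ⟨⟨hx0', hx1⟩, ?_⟩
      intro hCx
      apply hxV
      intro p hp
      rw [hΛ] at hp; obtain ⟨m, n, rfl⟩ := hp
      rw [hnorm_iff]
      obtain ⟨hc0, hc1⟩ := hcoord m n
      have hk := babai_key a b (x 0) (x 1) ha0 (by linarith) hb hab
        hx0'.1 hx0'.2 hx1.1 hx1.2 hCx.1 hCx.2.1 hCx.2.2.1 hCx.2.2.2 m n
      rw [hsub0, hsub1, hc0, hc1]
      nlinarith [hk]
    · rintro ⟨⟨hx0, hx1⟩, hnC⟩
      have hx0' : x 0 ∈ Set.Icc (-(1 / 2):ℝ) (1 / 2) := by simpa using hx0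
      refine ⟨⟨hx0', hx1⟩, ?_⟩
      intro hxV
      apply hnC
      have get : ∀ m n : ℤ, 2*(x 0*((m:ℝ) + n*a) + x 1*((n:ℝ)*b))
          ≤ ((m:ℝ)+n*a)^2 + ((n:ℝ)*b)^2 := by
        intro m n
        have hp : (m • v₁ + n • v₂ : EuclideanSpace ℝ (Fin 2)) ∈ Λ := by
          rw [hΛ]; exact ⟨m, n, rfl⟩
        have hle := hxV _ hp
        rw [hnorm_iff] at hle
        obtain ⟨hc0, hc1⟩ := hcoord m n
        rw [hsub0, hsub1, hc0, hc1] at hle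
        nlinarith [hle]
      refine ⟨?_, ?_, ?_, ?_⟩
      · have := get 0 1; push_cast at this; nlinarith [this]
      · have := get 0 (-1); push_cast at this; nlinarith [this]
      · have := get (-1) 1; push_cast at this; nlinarith [this]
      · have := get 1 (-1); push_cast at this; nlinarith [this]
  -- volume of the Babai cell
  have hvolB : volume B₀ = ENNReal.ofReal b := by
    have hBpre : B₀ = φ ⁻¹' (Set.Icc (-(1/2):ℝ) (1/2) ×ˢ Set.Icc (-(b/2)) (b/2)) := by
      ext x
      rw [hB₀]; rfl
    rw [hBpre, hφp.measure_preimage_equiv, Measure.volume_eq_prod, Measure.prod_prod,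
      Real.volume_Icc, Real.volume_Icc, ← ENNReal.ofReal_mul (by norm_num)]
    norm_num
  rw [hmain, hφp.measure_preimage_equiv, hvolB]
  -- split on a = 0
  rcases ha0.eq_or_lt with haz | hapos
  · -- a = 0 : the error set is empty
    have hEempty : E = ∅ := by
      rw [Set.eq_empty_iff_forall_notMem]
      rintro ⟨u, w⟩ hp
      simp only [hEdef, Set.mem_setOf_eq, Set.mem_Icc] at hp
      obtain ⟨⟨⟨hu1, hu2⟩, hw1, hw2⟩, hC⟩ := hp
      exact hC ⟨by nlinarith, by nlinarith, by nlinarith, by nlinarith⟩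
    rw [hEempty, measure_empty]
    rw [← haz]
    norm_num
  · -- 0 < a : the error set is a union of four triangles
    have ha1 : a < 1 := by linarith
    set T₁ : Set (ℝ×ℝ) := {p : ℝ×ℝ | p.1 ∈ Set.Ioc (a/2) (1/2) ∧
        p.2 ∈ Set.Ioc ((a^2+b^2)/(2*b) + (-(a/b))*p.1) (b/2)} with hT₁def
    set T₃ : Set (ℝ×ℝ) := {p : ℝ×ℝ | p.1 ∈ Set.Ico (-(1/2)) ((a-1)/2) ∧
        p.2 ∈ Set.Ioc (((a-1)^2+b^2)/(2*b) + ((1-a)/b)*p.1) (b/2)} with hT₃def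
    -- translation between line conditions and the half-plane conditions
    have iff1 : ∀ u w : ℝ, ((a^2+b^2)/(2*b) + (-(a/b))*u < w ↔ a^2+b^2 < 2*(u*a + w*b)) := by
      intro u w
      rw [show (a^2+b^2)/(2*b) + (-(a/b))*u = (a^2+b^2-2*(u*a))/(2*b) from by
        field_simp; ring, div_lt_iff₀ (by positivity)]
      constructor <;> intro h <;> nlinarith [h]
    have iff3 : ∀ u w : ℝ, (((a-1)^2+b^2)/(2*b) + ((1-a)/b)*u < w ↔
        (a-1)^2+b^2 < 2*(u*(a-1) + w*b)) := by
      intro u w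
      rw [show ((a-1)^2+b^2)/(2*b) + ((1-a)/b)*u = ((a-1)^2+b^2-2*(u*(a-1)))/(2*b) from by
        field_simp; ring, div_lt_iff₀ (by positivity)]
      constructor <;> intro h <;> nlinarith [h]
    -- membership characterizations
    have memT₁ : ∀ p : ℝ×ℝ, p ∈ T₁ ↔
        ((p.1 ∈ Set.Icc (-(1/2):ℝ) (1/2) ∧ p.2 ∈ Set.Icc (-(b/2)) (b/2)) ∧
          a^2+b^2 < 2*(p.1*a + p.2*b)) := by
      rintro ⟨u, w⟩
      simp only [hT₁def, Set.mem_setOf_eq, Set.mem_Ioc, Set.mem_Icc]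
      rw [iff1]
      constructor
      · rintro ⟨⟨h1, h2⟩, h3, h4⟩
        refine ⟨⟨⟨by linarith, h2⟩, ⟨by nlinarith, h4⟩⟩, h3⟩
      · rintro ⟨⟨⟨h1, h2⟩, ⟨h3, h4⟩⟩, h5⟩
        exact ⟨⟨by nlinarith, h2⟩, h5, h4⟩
    have memT₃ : ∀ p : ℝ×ℝ, p ∈ T₃ ↔
        ((p.1 ∈ Set.Icc (-(1/2):ℝ) (1/2) ∧ p.2 ∈ Set.Icc (-(b/2)) (b/2)) ∧
          (a-1)^2+b^2 < 2*(p.1*(a-1) + p.2*b)) := by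
      rintro ⟨u, w⟩
      simp only [hT₃def, Set.mem_setOf_eq, Set.mem_Ioc, Set.mem_Ico, Set.mem_Icc]
      rw [iff3]
      constructor
      · rintro ⟨⟨h1, h2⟩, h3, h4⟩
        refine ⟨⟨⟨h1, by linarith⟩, ⟨by nlinarith, h4⟩⟩, h3⟩
      · rintro ⟨⟨⟨h1, h2⟩, ⟨h3, h4⟩⟩, h5⟩
        exact ⟨⟨h1, by nlinarith⟩, h5, h4⟩
    -- positivity of w on T₁ ∪ T₃
    have wpos : ∀ p : ℝ×ℝ, p ∈ T₁ ∪ T₃ → 0 < p.2 := by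
      rintro ⟨u, w⟩ hp
      rcases hp with hp | hp
      · rw [memT₁] at hp
        obtain ⟨⟨⟨h1, h2⟩, _⟩, h5⟩ := hp
        nlinarith
      · rw [memT₃] at hp
        obtain ⟨⟨⟨h1, h2⟩, _⟩, h5⟩ := hp
        nlinarith
    -- decomposition of the error set
    have hE_eq : E = (T₁ ∪ T₃) ∪ (-(T₁ ∪ T₃)) := by
      ext p
      obtain ⟨u, w⟩ := p
      have hnegmem : ∀ S : Set (ℝ×ℝ), ((u, w) ∈ -S ↔ (-u, -w) ∈ S) := by
        intro S; rw [Set.mem_neg]; rfl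
      simp only [Set.mem_union, hnegmem]
      rw [memT₁, memT₃, memT₁, memT₃]
      simp only [hEdef, Set.mem_setOf_eq, Set.mem_Icc]
      constructor
      · rintro ⟨⟨⟨h1, h2⟩, ⟨h3, h4⟩⟩, h5⟩
        push_neg at h5
        by_cases c1 : 2*(u*a + w*b) ≤ a^2 + b^2
        · by_cases c2 : 2*(u*(-a) + w*(-b)) ≤ a^2 + b^2
          · by_cases c3 : 2*(u*(a-1) + w*b) ≤ (a-1)^2 + b^2
            · have c4 := h5 c1 c2 c3
              right; right
              exact ⟨⟨⟨by linarith, by linarith⟩, ⟨by linarith, by linarith⟩⟩, by nlinarith⟩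
            · left; right
              exact ⟨⟨⟨h1, h2⟩, ⟨h3, h4⟩⟩, by linarith⟩
          · right; left
            exact ⟨⟨⟨by linarith, by linarith⟩, ⟨by linarith, by linarith⟩⟩, by nlinarith⟩
        · left; left
          exact ⟨⟨⟨h1, h2⟩, ⟨h3, h4⟩⟩, by linarith⟩
      · rintro ((⟨⟨⟨h1, h2⟩, ⟨h3, h4⟩⟩, h5⟩ | ⟨⟨⟨h1, h2⟩, ⟨h3, h4⟩⟩, h5⟩) |
          (⟨⟨⟨h1, h2⟩, ⟨h3, h4⟩⟩, h5⟩ | ⟨⟨⟨h1, h2⟩, ⟨h3, h4⟩⟩, h5⟩))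
        · exact ⟨⟨⟨h1, h2⟩, ⟨h3, h4⟩⟩, fun hC => by nlinarith [hC.1]⟩
        · exact ⟨⟨⟨h1, h2⟩, ⟨h3, h4⟩⟩, fun hC => by nlinarith [hC.2.2.1]⟩
        · exact ⟨⟨⟨by linarith, by linarith⟩, ⟨by linarith, by linarith⟩⟩,
            fun hC => by nlinarith [hC.2.1]⟩
        · exact ⟨⟨⟨by linarith, by linarith⟩, ⟨by linarith, by linarith⟩⟩,
            fun hC => by nlinarith [hC.2.2.2]⟩
    -- measurability
    have hmT₁ : MeasurableSet T₁ := by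
      apply MeasurableSet.inter
      · exact measurable_fst measurableSet_Ioc
      · apply MeasurableSet.inter
        · exact measurableSet_lt (by fun_prop) measurable_snd
        · exact measurable_snd measurableSet_Iic
    have hmT₃ : MeasurableSet T₃ := by
      apply MeasurableSet.inter
      · exact measurable_fst measurableSet_Ico
      · apply MeasurableSet.inter
        · exact measurableSet_lt (by fun_prop) measurable_snd
        · exact measurable_snd measurableSet_Iic
    -- volumes of the two basic triangles
    have hvT₁ : volume T₁ = ENNReal.ofReal (a*(1-a)^2/(8*b)) := by
      rw [hT₁def, babai_vol_Ioc _ _ _ _ _ (by linarith)]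
      · congr 1; field_simp; ring
      · intro u hu
        rw [show (a^2+b^2)/(2*b) + (-(a/b))*u = (a^2+b^2-2*(u*a))/(2*b) from by
          field_simp; ring, div_le_iff₀ (by positivity)]
        obtain ⟨hu1, hu2⟩ := hu
        nlinarith
    have hvT₃ : volume T₃ = ENNReal.ofReal (a^2*(1-a)/(8*b)) := by
      rw [hT₃def, babai_vol_Ico _ _ _ _ _ (by linarith)]
      · congr 1; field_simp; ring
      · intro u hu
        rw [show ((a-1)^2+b^2)/(2*b) + ((1-a)/b)*u = ((a-1)^2+b^2-2*(u*(a-1)))/(2*b) from by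
          field_simp; ring, div_le_iff₀ (by positivity)]
        obtain ⟨hu1, hu2⟩ := hu
        nlinarith
    -- disjointness
    have hd13 : Disjoint T₁ T₃ := by
      rw [Set.disjoint_left]
      rintro ⟨u, w⟩ h1 h3
      rw [hT₁def] at h1; rw [hT₃def] at h3
      obtain ⟨⟨hu1, _⟩, _⟩ := h1
      obtain ⟨⟨_, hu2⟩, _⟩ := h3
      simp only at hu1 hu2
      linarith
    have hdtopbot : Disjoint (T₁ ∪ T₃) (-(T₁ ∪ T₃)) := by
      rw [Set.disjoint_left]
      intro p hp hnp
      have h1 := wpos p hp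
      have h2 := wpos (-p) (Set.mem_neg.mp hnp)
      have : (-p).2 = -(p.2) := rfl
      rw [this] at h2
      linarith
    -- total volume
    have hvolU : volume (T₁ ∪ T₃) = ENNReal.ofReal (a*(1-a)/(8*b)) := by
      rw [measure_union hd13 hmT₃, hvT₁, hvT₃,
        ← ENNReal.ofReal_add (div_nonneg (by nlinarith) (by positivity))
          (div_nonneg (by nlinarith) (by positivity))]
      congr 1; ring
    have hvolE : volume E = ENNReal.ofReal (a*(1-a)/(4*b)) := by
      rw [hE_eq, measure_union hdtopbot (hmT₁.union hmT₃).neg, Measure.measure_neg, hvolU,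
        ← ENNReal.ofReal_add (div_nonneg (by nlinarith) (by positivity))
          (div_nonneg (by nlinarith) (by positivity))]
      congr 1; field_simp; ring
    rw [hvolE, ENNReal.toReal_ofReal (div_nonneg (by nlinarith) (by positivity)),
      ENNReal.toReal_ofReal hb.le]
    field_simp
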